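/- Let a < b, let p : ℝ → ℝ be continuously differentiable on a neighborhood of [a,b] with p(t) > 0 on [a,b], let ψ_θ, h : ℝ → ℝ be continuously differentiable on a neighborhood of [a,b] with h(a) = h(b) = 0, and set ψ(t) = p'(t)/p(t). Then (1/2)∫_a^b p(t)(ψ(t) − ψ_θ(t))² h(t) dt = ∫_a^b p(t)[(1/2)ψ_θ(t)² h(t) + ψ_θ'(t) h(t) + ψ_θ(t) h'(t)] dt + (1/2)∫_a^b p(t) ψ(t)² h(t) dt. In particular, the explicit weighted score-matching loss of the model score ψ_θ against the data density p equals the implicit weighted score-matching objective plus a term not depending on ψ_θ. -/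

import Mathlib

open MeasureTheory intervalIntegral

/-- **Theorem (explicit WSM = implicit WSM + const, one-dimensional case).**
For a positive continuously differentiable data density `p` on a neighborhood of
`[a,b]` with score `ψ = p'/p`, a continuously differentiable model score `ψθ`, and a
continuously differentiable weight `h` vanishing at both endpoints, the explicit
weighted score-matching loss equals the implicit weighted score-matching objective
plus a term not depending on `ψθ`. -/
theorem explicit_eq_implicit_wsm_one_dim
    {a b : ℝ} (hab : a < b)
    (p ψθ h pd ψθd hd : ℝ → ℝ)
    (hp : ∀ t ∈ Set.Icc a b, HasDerivAt p (pd t) t)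
    (hpc : ContinuousOn pd (Set.Icc a b))
    (hppos : ∀ t ∈ Set.Icc a b, 0 < p t)
    (hψθ : ∀ t ∈ Set.Icc a b, HasDerivAt ψθ (ψθd t) t)
    (hψθc : ContinuousOn ψθd (Set.Icc a b))
    (hh : ∀ t ∈ Set.Icc a b, HasDerivAt h (hd t) t)
    (hhc : ContinuousOn hd (Set.Icc a b))
    (hha : h a = 0) (hhb : h b = 0) :
    (1 / 2 : ℝ) * ∫ t in a..b, p t * (pd t / p t - ψθ t) ^ 2 * h t =
      (∫ t in a..b, p t *
          ((1 / 2) * ψθ t ^ 2 * h t + ψθd t * h t + ψθ t * hd t)) +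
        (1 / 2) * ∫ t in a..b, p t * (pd t / p t) ^ 2 * h t := by
  have hab' : a ≤ b := hab.le
  have huIcc : Set.uIcc a b = Set.Icc a b := Set.uIcc_of_le hab'
  have hcp : ContinuousOn p (Set.Icc a b) := fun t ht =>
    (hp t ht).continuousAt.continuousWithinAt
  have hcψ : ContinuousOn ψθ (Set.Icc a b) := fun t ht =>
    (hψθ t ht).continuousAt.continuousWithinAt
  have hch : ContinuousOn h (Set.Icc a b) := fun t ht =>
    (hh t ht).continuousAt.continuousWithinAt
  have hpne : ∀ t ∈ Set.Icc a b, p t ≠ 0 := fun t ht => (hppos t ht).ne'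
  -- integrability of the various pieces
  have II : ∀ f : ℝ → ℝ, ContinuousOn f (Set.Icc a b) →
      IntervalIntegrable f volume a b := fun f hf =>
    hf.intervalIntegrable_of_Icc hab'
  have intA : IntervalIntegrable (fun t => p t * (pd t / p t) ^ 2 * h t) volume a b :=
    II _ (((hcp.mul ((hpc.div hcp hpne).pow 2)).mul hch))
  have intB : IntervalIntegrable (fun t => pd t * ψθ t * h t) volume a b :=
    II _ (((hpc.mul hcψ).mul hch))
  have intC : IntervalIntegrable (fun t => p t * ψθ t ^ 2 * h t) volume a b :=
    II _ (((hcp.mul (hcψ.pow 2)).mul hch))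
  have intD : IntervalIntegrable (fun t => p t * ψθd t * h t) volume a b :=
    II _ (((hcp.mul hψθc).mul hch))
  have intE : IntervalIntegrable (fun t => p t * ψθ t * hd t) volume a b :=
    II _ (((hcp.mul hcψ).mul hhc))
  -- integration by parts: ∫ (p ψθ h)' = 0
  have hF : ∀ t ∈ Set.uIcc a b, HasDerivAt (fun t => p t * ψθ t * h t)
      (pd t * ψθ t * h t + p t * ψθd t * h t + p t * ψθ t * hd t) t := by
    intro t ht
    rw [huIcc] at ht
    have := ((hp t ht).mul (hψθ t ht)).mul (hh t ht)
    refine this.congr_deriv ?_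
    simp only [Pi.mul_apply]
    ring
  have hFd : IntervalIntegrable
      (fun t => pd t * ψθ t * h t + p t * ψθd t * h t + p t * ψθ t * hd t)
      volume a b := (intB.add intD).add intE
  have key : (∫ t in a..b, (pd t * ψθ t * h t + p t * ψθd t * h t + p t * ψθ t * hd t))
      = 0 := by
    rw [integral_eq_sub_of_hasDerivAt hF hFd]
    simp [hha, hhb]
  have keysplit : (∫ t in a..b, pd t * ψθ t * h t)
      + ((∫ t in a..b, p t * ψθd t * h t) + (∫ t in a..b, p t * ψθ t * hd t)) = 0 := by
    rw [← integral_add intD intE, ← integral_add intB (intD.add intE)]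
    rw [← key]
    congr 1
    ext t
    ring
  -- expand the LHS integrand
  have e1 : (∫ t in a..b, p t * (pd t / p t - ψθ t) ^ 2 * h t)
      = (∫ t in a..b, p t * (pd t / p t) ^ 2 * h t)
        - 2 * (∫ t in a..b, pd t * ψθ t * h t)
        + (∫ t in a..b, p t * ψθ t ^ 2 * h t) := by
    rw [← intervalIntegral.integral_const_mul, ← integral_sub intA (intB.const_mul 2),
      ← integral_add (intA.sub (intB.const_mul 2)) intC]
    apply integral_congr
    intro t ht
    rw [huIcc] at ht
    have hne := hpne t ht
    field_simp
    ring
  -- expand the RHS first integrand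
  have e2 : (∫ t in a..b, p t * ((1 / 2) * ψθ t ^ 2 * h t + ψθd t * h t + ψθ t * hd t))
      = (1 / 2) * (∫ t in a..b, p t * ψθ t ^ 2 * h t)
        + ((∫ t in a..b, p t * ψθd t * h t) + (∫ t in a..b, p t * ψθ t * hd t)) := by
    rw [← intervalIntegral.integral_const_mul, ← integral_add intD intE,
      ← integral_add (intC.const_mul (1/2)) (intD.add intE)]
    apply integral_congr
    intro t ht
    ring
  rw [e1, e2]
  linarith [keysplit]
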